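/- arXiv:1307.7546 — 10 statements merged into one kernel-verified Lean document; each statement's English description precedes it below -/
import Mathlib

section
/- Let (U,V) be a pair of random variables on a probability space (Ω, 𝓕, P), each uniformly distributed on [0,1] (representing a copula C), and let γ ∈ [0,1]. Then the following are equivalent: (i) for all G1, G2 ∈ 𝒢 with G1 ⪯st G2 one has P(G1⁻¹(U) ≤ G2⁻¹(V)) ≥ γ; (ii) P(U ≤ V) ≥ γ. (That is, C belongs to the class 𝓛_γ if and only if η(C) := P(U ≤ V) ≥ γ.) -/
open MeasureTheory Set

noncomputable section

/-- A cumulative distribution function on ℝ. -/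
def IsCDF (G : ℝ → ℝ) : Prop :=
  Monotone G ∧ (∀ x, ContinuousWithinAt G (Ici x) x) ∧
    Filter.Tendsto G Filter.atBot (nhds 0) ∧ Filter.Tendsto G Filter.atTop (nhds 1)

/-- The class 𝒢: CDFs that are continuous and strictly increasing where 0 < G < 1. -/
def MemG (G : ℝ → ℝ) : Prop :=
  IsCDF G ∧ Continuous G ∧ StrictMonoOn G {x | 0 < G x ∧ G x < 1}

/-- Generalized inverse (quantile function). -/
def Ginv (G : ℝ → ℝ) (u : ℝ) : ℝ := sInf {x | u ≤ G x}

/-- Usual stochastic ordering between CDFs: G1 ⪯st G2 iff G2 ≤ G1 pointwise. -/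
def StOrd (G1 G2 : ℝ → ℝ) : Prop := ∀ t, G2 t ≤ G1 t

/-- A random variable uniformly distributed on [0,1]. -/
def IsUniform01 {Ω : Type*} [MeasurableSpace Ω] (P : Measure Ω) (U : Ω → ℝ) : Prop :=
  Measurable U ∧ Measure.map U P = volume.restrict (Icc 0 1)

/-- Cross comparison of generalized inverses under stochastic order. -/
lemma ginv_cross {G1 G2 : ℝ → ℝ} (h1 : IsCDF G1) (h2 : IsCDF G2)
    (hord : StOrd G1 G2) {u v : ℝ} (hu : 0 < u) (hv : v < 1) (huv : u ≤ v) :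
    Ginv G1 u ≤ Ginv G2 v := by
  have hne : {x | v ≤ G2 x}.Nonempty := by
    obtain ⟨x, hx⟩ := (h2.2.2.2.eventually (eventually_gt_nhds hv)).exists
    exact ⟨x, hx.le⟩
  have hbdd : BddBelow {x | u ≤ G1 x} := by
    obtain ⟨t, ht⟩ := (h1.2.2.1.eventually (eventually_lt_nhds hu)).exists
    exact ⟨t, fun x hx => le_of_not_gt fun hlt =>
      absurd (le_trans hx (h1.1 hlt.le)) (not_le.2 ht)⟩
  exact csInf_le_csInf hbdd hne (fun x hx => le_trans huv hx |>.trans (hord x))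

/-- The clamp function is in 𝒢. -/
lemma memG_clamp : MemG (fun x => min (max x 0) 1) := by
  have hmono : Monotone (fun x : ℝ => min (max x 0) 1) :=
    fun a b h => min_le_min (max_le_max h le_rfl) le_rfl
  have hcont : Continuous (fun x : ℝ => min (max x 0) 1) :=
    ((continuous_id.max continuous_const).min continuous_const)
  refine ⟨⟨hmono, fun x => hcont.continuousWithinAt, ?_, ?_⟩, hcont, ?_⟩
  · refine Filter.Tendsto.congr' ?_ tendsto_const_nhds
    filter_upwards [Filter.eventually_le_atBot (0:ℝ)] with x hx
    simp [max_eq_right hx]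
  · refine Filter.Tendsto.congr' ?_ tendsto_const_nhds
    filter_upwards [Filter.eventually_ge_atTop (1:ℝ)] with x hx
    simp [min_eq_right, le_max_of_le_left hx]
  · intro a ha b hb hab
    simp only [mem_setOf_eq] at ha hb
    have ha0 : 0 < a := by
      by_contra h
      push_neg at h
      simp [max_eq_right h] at ha
    have hb1 : b < 1 := by
      by_contra h
      push_neg at h
      have : min (max b 0) 1 = 1 := min_eq_right (le_max_of_le_left h)
      simp [this] at hb
    have ha1 : a < 1 := hab.trans hb1
    have hb0 : 0 < b := ha0.trans hab
    simp only [max_eq_left ha0.le, max_eq_left hb0.le, min_eq_left ha1.le,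
      min_eq_left hb1.le]
    exact hab

lemma ginv_clamp {u : ℝ} (hu : u ∈ Ioo (0:ℝ) 1) :
    Ginv (fun x => min (max x 0) 1) u = u := by
  have : {x | u ≤ min (max x 0) 1} = Ici u := by
    ext x
    simp only [mem_setOf_eq, mem_Ici]
    constructor
    · intro h
      have h2 : u ≤ max x 0 := h.trans (min_le_left _ _)
      rcases le_or_gt 0 x with hx | hx
      · rwa [max_eq_left hx] at h2
      · rw [max_eq_right hx.le] at h2
        exact absurd h2 (not_le.2 hu.1)
    · intro h
      exact le_min (h.trans (le_max_left x 0)) hu.2.le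
  rw [Ginv, this, csInf_Ici]

lemma unif_null {Ω : Type*} [MeasurableSpace Ω] (P : Measure Ω) [IsProbabilityMeasure P]
    {U : Ω → ℝ} (hU : IsUniform01 P U) : P {ω | U ω ∉ Ioo 0 1} = 0 := by
  have h1 : P {ω | U ω ∉ Ioo 0 1} = Measure.map U P (Ioo 0 1)ᶜ := by
    rw [Measure.map_apply hU.1 measurableSet_Ioo.compl]
    rfl
  rw [h1, hU.2, Measure.restrict_apply measurableSet_Ioo.compl]
  have h2 : (Ioo (0:ℝ) 1)ᶜ ∩ Icc 0 1 = ({0, 1} : Set ℝ) := by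
    rw [inter_comm, ← diff_eq, Icc_diff_Ioo_same (by norm_num : (0:ℝ) ≤ 1)]
  rw [h2]
  exact (Set.toFinite ({0, 1} : Set ℝ)).measure_zero volume

/-- C ∈ 𝓛_γ (i.e. η(C,G1,G2) ≥ γ for all G1 ⪯st G2 in 𝒢) iff η(C) = P(U ≤ V) ≥ γ. -/
theorem stmt4 {Ω : Type*} [MeasurableSpace Ω] (P : Measure Ω) [IsProbabilityMeasure P]
    (U V : Ω → ℝ) (hU : IsUniform01 P U) (hV : IsUniform01 P V)
    (γ : ℝ) (hγ : γ ∈ Icc (0:ℝ) 1) :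
    (∀ G1 G2 : ℝ → ℝ, MemG G1 → MemG G2 → StOrd G1 G2 →
        ENNReal.ofReal γ ≤ P {ω | Ginv G1 (U ω) ≤ Ginv G2 (V ω)}) ↔
      ENNReal.ofReal γ ≤ P {ω | U ω ≤ V ω} := by
  have hNU : P {ω | U ω ∉ Ioo 0 1} = 0 := unif_null P hU
  have hNV : P {ω | V ω ∉ Ioo 0 1} = 0 := unif_null P hV
  constructor
  · intro h
    have key := h _ _ memG_clamp memG_clamp (fun t => le_rfl)
    have hsub : {ω | Ginv (fun x => min (max x 0) 1) (U ω) ≤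
        Ginv (fun x => min (max x 0) 1) (V ω)} ⊆
        {ω | U ω ≤ V ω} ∪ ({ω | U ω ∉ Ioo 0 1} ∪ {ω | V ω ∉ Ioo 0 1}) := by
      intro ω hω
      by_cases h1 : U ω ∈ Ioo (0:ℝ) 1
      · by_cases h2 : V ω ∈ Ioo (0:ℝ) 1
        · left
          simp only [mem_setOf_eq] at hω ⊢
          rwa [ginv_clamp h1, ginv_clamp h2] at hω
        · exact Or.inr (Or.inr h2)
      · exact Or.inr (Or.inl h1)
    calc ENNReal.ofReal γ ≤ _ := key
      _ ≤ P ({ω | U ω ≤ V ω} ∪ ({ω | U ω ∉ Ioo 0 1} ∪ {ω | V ω ∉ Ioo 0 1})) :=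
          measure_mono hsub
      _ ≤ P {ω | U ω ≤ V ω} + P ({ω | U ω ∉ Ioo 0 1} ∪ {ω | V ω ∉ Ioo 0 1}) :=
          measure_union_le _ _
      _ ≤ P {ω | U ω ≤ V ω} + (P {ω | U ω ∉ Ioo 0 1} + P {ω | V ω ∉ Ioo 0 1}) :=
          add_le_add_right (measure_union_le _ _) _
      _ = P {ω | U ω ≤ V ω} := by rw [hNU, hNV, add_zero, add_zero]
  · intro h G1 G2 hG1 hG2 hord
    have hsub : {ω | U ω ≤ V ω} ⊆
        {ω | Ginv G1 (U ω) ≤ Ginv G2 (V ω)} ∪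
          ({ω | U ω ∉ Ioo 0 1} ∪ {ω | V ω ∉ Ioo 0 1}) := by
      intro ω hω
      by_cases h1 : U ω ∈ Ioo (0:ℝ) 1
      · by_cases h2 : V ω ∈ Ioo (0:ℝ) 1
        · exact Or.inl (ginv_cross hG1.1 hG2.1 hord h1.1 h2.2 hω)
        · exact Or.inr (Or.inr h2)
      · exact Or.inr (Or.inl h1)
    calc ENNReal.ofReal γ ≤ _ := h
      _ ≤ P ({ω | Ginv G1 (U ω) ≤ Ginv G2 (V ω)} ∪
          ({ω | U ω ∉ Ioo 0 1} ∪ {ω | V ω ∉ Ioo 0 1})) := measure_mono hsub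
      _ ≤ P {ω | Ginv G1 (U ω) ≤ Ginv G2 (V ω)} +
          P ({ω | U ω ∉ Ioo 0 1} ∪ {ω | V ω ∉ Ioo 0 1}) := measure_union_le _ _
      _ ≤ P {ω | Ginv G1 (U ω) ≤ Ginv G2 (V ω)} +
          (P {ω | U ω ∉ Ioo 0 1} + P {ω | V ω ∉ Ioo 0 1}) :=
          add_le_add_right (measure_union_le _ _) _
      _ = P {ω | Ginv G1 (U ω) ≤ Ginv G2 (V ω)} := by rw [hNU, hNV, add_zero, add_zero]
end
end

section
/- Let (U,V) be a pair of random variables on a probability space (Ω, 𝓕, P), each uniformly distributed on [0,1] (representing a copula C). Then P(U ≤ V) is the least element (i.e., the attained infimum) of the set { P(G1⁻¹(U) ≤ G2⁻¹(V)) : G1, G2 ∈ 𝒢, G1 ⪯st G2 }; in particular the infimum is a minimum and is attained when G1 = G2. -/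
open MeasureTheory Set
open scoped ENNReal

noncomputable section

/-- The clamp function: identity on [0,1]. -/
def Gclamp : ℝ → ℝ := fun x => min 1 (max 0 x)

lemma memG_Gclamp : MemG Gclamp := by
  have hmono : Monotone Gclamp := fun a b hab =>
    min_le_min le_rfl (max_le_max le_rfl hab)
  have hcont : Continuous Gclamp := continuous_const.min (continuous_const.max continuous_id)
  have hbot : Filter.Tendsto Gclamp Filter.atBot (nhds 0) := by
    refine Filter.Tendsto.congr' ?_ tendsto_const_nhds
    filter_upwards [Filter.eventually_le_atBot (0 : ℝ)] with x hx
    simp [Gclamp, max_eq_left hx]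
  have htop : Filter.Tendsto Gclamp Filter.atTop (nhds 1) := by
    refine Filter.Tendsto.congr' ?_ tendsto_const_nhds
    filter_upwards [Filter.eventually_ge_atTop (1 : ℝ)] with x hx
    have h0 : max 0 x = x := max_eq_right (le_trans zero_le_one hx)
    simp [Gclamp, h0, min_eq_left hx]
  refine ⟨⟨hmono, fun x => hcont.continuousWithinAt, hbot, htop⟩, hcont, ?_⟩
  intro a ha b hb hab
  obtain ⟨ha0, ha1⟩ := ha
  obtain ⟨hb0, hb1⟩ := hb
  have hA : Gclamp a = a := by
    have h1 : (0:ℝ) < max 0 a := lt_of_lt_of_le ha0 (min_le_right _ _)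
    have h2 : (0:ℝ) < a := by
      rcases le_or_gt a 0 with h | h
      · simp [max_eq_left h] at h1
      · exact h
    have h3 : max 0 a < 1 := by
      by_contra h
      push_neg at h
      simp [Gclamp, min_eq_left h] at ha1
    have h4 : a < 1 := lt_of_le_of_lt (le_max_right 0 a) h3
    simp [Gclamp, max_eq_right h2.le, min_eq_right h4.le]
  have hB : Gclamp b = b := by
    have h1 : (0:ℝ) < max 0 b := lt_of_lt_of_le hb0 (min_le_right _ _)
    have h2 : (0:ℝ) < b := by
      rcases le_or_gt b 0 with h | h
      · simp [max_eq_left h] at h1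
      · exact h
    have h3 : max 0 b < 1 := by
      by_contra h
      push_neg at h
      simp [Gclamp, min_eq_left h] at hb1
    have h4 : b < 1 := lt_of_le_of_lt (le_max_right 0 b) h3
    simp [Gclamp, max_eq_right h2.le, min_eq_right h4.le]
  rw [hA, hB]; exact hab

lemma ginv_Gclamp {u : ℝ} (hu : u ∈ Icc (0:ℝ) 1) : Ginv Gclamp u = u := by
  obtain ⟨hu0, hu1⟩ := hu
  rcases eq_or_lt_of_le hu0 with h0 | h0
  · have hset : {x | u ≤ Gclamp x} = univ := by
      ext x
      simp only [mem_setOf_eq, mem_univ, iff_true, ← h0]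
      exact le_min zero_le_one (le_max_left 0 x)
    rw [Ginv, hset, csInf_of_not_bddBelow not_bddBelow_univ, Real.sInf_empty, ← h0]
  · have hset : {x | u ≤ Gclamp x} = Ici u := by
      ext x
      simp only [mem_setOf_eq, mem_Ici]
      constructor
      · intro h
        have h2 : u ≤ max 0 x := h.trans (min_le_right _ _)
        rcases le_or_gt x 0 with hx | hx
        · rw [max_eq_left hx] at h2; linarith
        · rwa [max_eq_right hx.le] at h2
      · intro h
        exact le_min hu1 (h.trans (le_max_right 0 x))
    rw [Ginv, hset, csInf_Ici]

lemma ginv_mono_le {G1 G2 : ℝ → ℝ} (h1 : IsCDF G1) (h2 : IsCDF G2) (hst : StOrd G1 G2)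
    {u v : ℝ} (hu : 0 < u) (hv : v < 1) (huv : u ≤ v) : Ginv G1 u ≤ Ginv G2 v := by
  have hne : {x | v ≤ G2 x}.Nonempty := by
    have h := h2.2.2.2
    have hev : ∀ᶠ x in Filter.atTop, v < G2 x := h.eventually_const_lt hv
    obtain ⟨x, hx⟩ := hev.exists
    exact ⟨x, hx.le⟩
  have hbdd : BddBelow {x | u ≤ G1 x} := by
    have h := h1.2.2.1
    have hev : ∀ᶠ x in Filter.atBot, G1 x < u := h.eventually_lt_const hu
    rw [Filter.eventually_atBot] at hev
    obtain ⟨x0, hx0⟩ := hev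
    refine ⟨x0, fun y hy => ?_⟩
    by_contra h'
    push_neg at h'
    exact absurd hy (not_le.mpr (hx0 y h'.le))
  refine csInf_le_csInf hbdd hne fun x hx => ?_
  exact le_trans (le_trans huv hx) (hst x)

lemma uniform_mem_Ioo_ae {Ω : Type*} [MeasurableSpace Ω] (P : Measure Ω)
    {U : Ω → ℝ} (hU : IsUniform01 P U) : ∀ᵐ ω ∂P, U ω ∈ Ioo (0:ℝ) 1 := by
  rw [ae_iff]
  have heq : {ω | ¬ U ω ∈ Ioo (0:ℝ) 1} = U ⁻¹' (Ioo 0 1)ᶜ := rfl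
  rw [heq, ← Measure.map_apply hU.1 measurableSet_Ioo.compl, hU.2,
    Measure.restrict_apply measurableSet_Ioo.compl]
  have hsub : (Ioo (0:ℝ) 1)ᶜ ∩ Icc 0 1 ⊆ {0, 1} := by
    intro x ⟨hx1, hx2⟩
    simp only [mem_compl_iff, mem_Ioo, not_and_or, not_lt] at hx1
    rcases hx1 with h | h
    · exact Or.inl (le_antisymm h hx2.1)
    · exact Or.inr (le_antisymm hx2.2 h)
  refine le_antisymm (le_trans (measure_mono hsub) ?_) (zero_le)
  rw [show ({0, 1} : Set ℝ) = {0} ∪ {1} by rfl]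
  refine le_of_eq ?_
  rw [measure_union_null (measure_singleton _) (measure_singleton _)]

/-- P(U ≤ V) is the least element of
{ P(G1⁻¹(U) ≤ G2⁻¹(V)) : G1, G2 ∈ 𝒢, G1 ⪯st G2 }; the infimum is a minimum. -/
theorem stmt5 {Ω : Type*} [MeasurableSpace Ω] (P : Measure Ω) [IsProbabilityMeasure P]
    (U V : Ω → ℝ) (hU : IsUniform01 P U) (hV : IsUniform01 P V) :
    IsLeast {p : ℝ≥0∞ | ∃ G1 G2 : ℝ → ℝ, MemG G1 ∧ MemG G2 ∧ StOrd G1 G2 ∧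
        p = P {ω | Ginv G1 (U ω) ≤ Ginv G2 (V ω)}}
      (P {ω | U ω ≤ V ω}) := by
  have hUae := uniform_mem_Ioo_ae P hU
  have hVae := uniform_mem_Ioo_ae P hV
  constructor
  · refine ⟨Gclamp, Gclamp, memG_Gclamp, memG_Gclamp, fun t => le_rfl, ?_⟩
    refine (measure_congr ?_).symm
    filter_upwards [hUae, hVae] with ω hu hv
    have h1 : Ginv Gclamp (U ω) = U ω := ginv_Gclamp ⟨hu.1.le, hu.2.le⟩
    have h2 : Ginv Gclamp (V ω) = V ω := ginv_Gclamp ⟨hv.1.le, hv.2.le⟩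
    show ((Ginv Gclamp (U ω) ≤ Ginv Gclamp (V ω)) = (U ω ≤ V ω))
    rw [h1, h2]
  · rintro p ⟨G1, G2, hG1, hG2, hst, rfl⟩
    refine measure_mono_ae ?_
    filter_upwards [hUae, hVae] with ω hu hv h
    exact ginv_mono_le hG1.1 hG2.1 hst hu.1 hv.2 h
end
end

section
/- Let (U,V) be a pair of random variables on a probability space (Ω, 𝓕, P), each uniformly distributed on [0,1] (representing a copula C). Let G, H : ℝ → ℝ be arbitrary cumulative distribution functions (nondecreasing, right-continuous, with limit 0 at −∞ and 1 at +∞), not necessarily continuous or strictly increasing, satisfying G ⪯st H, and define X := G⁻¹(U) and Y := H⁻¹(V) via the generalized inverse G⁻¹(u) := sInf {x : u ≤ G(x)}. Then P(X ≤ Y) ≥ P(U ≤ V); i.e., η(C,G,H) ≥ η(C) also for general distribution functions G ⪯st H. -/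
open MeasureTheory Set

noncomputable section

lemma ginv_mono_key {G H : ℝ → ℝ} (hG : IsCDF G) (hH : IsCDF H) (hst : StOrd G H)
    {u v : ℝ} (hu : 0 < u) (hv : v < 1) (huv : u ≤ v) : Ginv G u ≤ Ginv H v := by
  apply csInf_le_csInf
  · -- bddBelow {x | u ≤ G x}
    obtain ⟨x0, hx0⟩ := (hG.2.2.1.eventually_lt_const hu).exists
    refine ⟨x0, fun x hx => ?_⟩
    by_contra h
    push_neg at h
    exact absurd (le_trans hx (hG.1 h.le)) (not_le.mpr hx0)
  · -- nonempty {x | v ≤ H x}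
    obtain ⟨x, hx⟩ := (hH.2.2.2.eventually_const_lt hv).exists
    exact ⟨x, hx.le⟩
  · intro x hx
    exact le_trans huv (le_trans hx (hst x))

lemma ae_mem_Ioo {Ω : Type*} [MeasurableSpace Ω] (P : Measure Ω) (U : Ω → ℝ)
    (hU : IsUniform01 P U) : ∀ᵐ ω ∂P, U ω ∈ Ioo (0:ℝ) 1 := by
  have h1 : ∀ᵐ x ∂(Measure.map U P), x ∈ Ioo (0:ℝ) 1 := by
    rw [hU.2]
    have h2 : (volume.restrict (Icc (0:ℝ) 1)) ((Ioo (0:ℝ) 1)ᶜ) = 0 := by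
      rw [Measure.restrict_apply (measurableSet_Ioo.compl)]
      have : (Ioo (0:ℝ) 1)ᶜ ∩ Icc 0 1 ⊆ {0} ∪ {1} := by
        intro x ⟨hx1, hx2⟩
        simp only [mem_compl_iff, mem_Ioo, not_and_or, not_lt] at hx1
        rcases hx1 with h | h
        · exact Or.inl (le_antisymm h hx2.1)
        · exact Or.inr (le_antisymm hx2.2 h)
      exact measure_mono_null this (measure_union_null Real.volume_singleton Real.volume_singleton)
    exact h2
  exact (ae_map_iff hU.1.aemeasurable measurableSet_Ioo).mp h1

/-- For arbitrary CDFs G ⪯st H (not necessarily in 𝒢), with X := G⁻¹(U),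
Y := H⁻¹(V), one has P(X ≤ Y) ≥ P(U ≤ V). -/
theorem stmt6 {Ω : Type*} [MeasurableSpace Ω] (P : Measure Ω) [IsProbabilityMeasure P]
    (U V : Ω → ℝ) (hU : IsUniform01 P U) (hV : IsUniform01 P V)
    (G H : ℝ → ℝ) (hG : IsCDF G) (hH : IsCDF H) (hst : StOrd G H) :
    P {ω | U ω ≤ V ω} ≤ P {ω | Ginv G (U ω) ≤ Ginv H (V ω)} := by
  apply measure_mono_ae
  filter_upwards [ae_mem_Ioo P U hU, ae_mem_Ioo P V hV] with ω hUω hVω hle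
  exact ginv_mono_key hG hH hst hUω.1 hVω.2 hle
end
end

section
/- Fix γ ∈ (0,1]. On the probability space ([0,1], Borel σ-algebra, Lebesgue measure λ), define X1(ω) = ω and X2^(γ)(ω) = ω + 1 − γ if ω ∈ [0,γ], and X2^(γ)(ω) = ω − γ if ω ∈ (γ,1]. Then for all u, v ∈ [0,1], the joint distribution function satisfies λ({ω : X1(ω) ≤ u and X2^(γ)(ω) ≤ v}) = min{ u, v, max{u − γ, 0} + max{v + γ − 1, 0} }. In other words, the connecting copula of (X1, X2^(γ)) is C_γ(u,v) = min{u, v, max{u−γ,0} + max{v+γ−1,0}}. -/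
open MeasureTheory Set

noncomputable section

set_option maxHeartbeats 1600000 in
/-- The connecting copula of (X1, X2^(γ)) is
C_γ(u,v) = min{u, v, max{u-γ,0} + max{v+γ-1,0}}. -/
theorem stmt8 (γ : ℝ) (hγ : γ ∈ Ioc (0:ℝ) 1) (u v : ℝ)
    (hu : u ∈ Icc (0:ℝ) 1) (hv : v ∈ Icc (0:ℝ) 1) :
    volume.restrict (Icc (0:ℝ) 1)
        {ω : ℝ | ω ≤ u ∧ (if ω ≤ γ then ω + 1 - γ else ω - γ) ≤ v}
      = ENNReal.ofReal (min u (min v (max (u - γ) 0 + max (v + γ - 1) 0))) := by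
  obtain ⟨hγ0, hγ1⟩ := hγ
  obtain ⟨hu0, hu1⟩ := hu
  obtain ⟨hv0, hv1⟩ := hv
  set a := min γ (min u (v + γ - 1)) with ha
  set b := min u (v + γ) with hb
  rw [Measure.restrict_apply' measurableSet_Icc]
  have hset : {ω : ℝ | ω ≤ u ∧ (if ω ≤ γ then ω + 1 - γ else ω - γ) ≤ v} ∩ Icc (0:ℝ) 1
      = Icc 0 a ∪ Ioc γ b := by
    ext ω
    simp only [mem_inter_iff, mem_setOf_eq, mem_Icc, mem_union, mem_Ioc, ha, hb,
      le_min_iff]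
    constructor
    · rintro ⟨⟨h1, h2⟩, h3, h4⟩
      by_cases hc : ω ≤ γ
      · left; rw [if_pos hc] at h2; exact ⟨h3, hc, h1, by linarith⟩
      · right; rw [if_neg hc] at h2; exact ⟨lt_of_not_ge hc, h1, by linarith⟩
    · rintro (⟨h0, h1, h2, h3⟩ | ⟨h0, h1, h2⟩)
      · exact ⟨⟨h2, by rw [if_pos h1]; linarith⟩, h0, by linarith⟩
      · exact ⟨⟨h1, by rw [if_neg (not_le.2 h0)]; linarith⟩, by linarith, by linarith⟩
  rw [hset, measure_union (Set.disjoint_left.2 fun x hx hx' =>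
      absurd hx'.1 (not_lt.2 (hx.2.trans (min_le_left _ _)))) measurableSet_Ioc]
  · rw [Real.volume_Icc, Real.volume_Ioc, sub_zero]
    have e1 : ENNReal.ofReal a = ENNReal.ofReal (max a 0) := by
      rcases le_total a 0 with h | h
      · simp [ENNReal.ofReal_eq_zero.2 h, max_eq_right h]
      · rw [max_eq_left h]
    have e2 : ENNReal.ofReal (b - γ) = ENNReal.ofReal (max (b - γ) 0) := by
      rcases le_total (b - γ) 0 with h | h
      · simp [ENNReal.ofReal_eq_zero.2 h, max_eq_right h]
      · rw [max_eq_left h]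
    rw [e1, e2, ← ENNReal.ofReal_add (le_max_right _ _) (le_max_right _ _)]
    congr 1
    simp only [ha, hb, min_def, max_def]
    split_ifs <;> linarith
end
end

section
/- For every γ ∈ (0,1] there exists a probability space carrying a pair (U,V) of random variables, each uniformly distributed on [0,1], such that P(U ≤ V) = γ. Consequently, for all 0 ≤ γ < γ' ≤ 1, there is a copula belonging to the class 𝓛_γ but not to 𝓛_{γ'}, so 𝓛_{γ'} is strictly contained in 𝓛_γ. -/
open MeasureTheory Set

noncomputable section

/-- For every γ ∈ (0,1] there is a copula (pair of uniform [0,1] rv's) with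
P(U ≤ V) = γ; consequently for 0 ≤ γ < γ' ≤ 1 there is a copula in 𝓛_γ but not in 𝓛_{γ'},
so the inclusion 𝓛_{γ'} ⊂ 𝓛_γ is strict. -/
theorem stmt9 :
    (∀ γ ∈ Ioc (0:ℝ) 1, ∃ (Ω : Type) (_ : MeasurableSpace Ω) (P : Measure Ω),
        IsProbabilityMeasure P ∧ ∃ U V : Ω → ℝ, IsUniform01 P U ∧ IsUniform01 P V ∧
          P {ω | U ω ≤ V ω} = ENNReal.ofReal γ) ∧
    (∀ γ γ' : ℝ, 0 ≤ γ → γ < γ' → γ' ≤ 1 →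
      ∃ (Ω : Type) (_ : MeasurableSpace Ω) (P : Measure Ω),
        IsProbabilityMeasure P ∧ ∃ U V : Ω → ℝ, IsUniform01 P U ∧ IsUniform01 P V ∧
          ENNReal.ofReal γ ≤ P {ω | U ω ≤ V ω} ∧
          ¬ ENNReal.ofReal γ' ≤ P {ω | U ω ≤ V ω}) := by
  have main : ∀ γ ∈ Ioc (0:ℝ) 1, ∃ (Ω : Type) (_ : MeasurableSpace Ω) (P : Measure Ω),
      IsProbabilityMeasure P ∧ ∃ U V : Ω → ℝ, IsUniform01 P U ∧ IsUniform01 P V ∧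
        P {ω | U ω ≤ V ω} = ENNReal.ofReal γ := by
    rintro γ ⟨hγ0, hγ1⟩
    set P : Measure ℝ := volume.restrict (Icc 0 1) with hP
    have hProb : IsProbabilityMeasure P := by
      constructor
      rw [hP, Measure.restrict_apply_univ, Real.volume_Icc]
      norm_num
    set V : ℝ → ℝ := fun ω => if ω ≤ γ then ω + (1 - γ) else ω - γ with hV
    have hVmeas : Measurable V := by
      apply Measurable.ite (measurableSet_Iic (a := γ))
      · exact measurable_id.add_const _
      · exact measurable_id.sub_const _
    refine ⟨ℝ, inferInstance, P, hProb, id, V, ⟨measurable_id, Measure.map_id.trans rfl⟩,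
      ⟨hVmeas, ?_⟩, ?_⟩
    · -- V is uniform on [0,1]
      ext s hs
      rw [Measure.map_apply hVmeas hs, hP,
        Measure.restrict_apply (hVmeas hs), Measure.restrict_apply hs]
      have hIcc_Ioc : (Icc (0:ℝ) 1 : Set ℝ) =ᵐ[volume] Ioc (0:ℝ) 1 := Ioc_ae_eq_Icc.symm
      have h1 : volume (V ⁻¹' s ∩ Icc 0 1) = volume (V ⁻¹' s ∩ Ioc 0 1) :=
        measure_congr ((Filter.EventuallyEq.refl _ _).inter hIcc_Ioc)
      have h2 : volume (s ∩ Icc (0:ℝ) 1) = volume (s ∩ Ioc (0:ℝ) 1) :=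
        measure_congr ((Filter.EventuallyEq.refl _ _).inter hIcc_Ioc)
      rw [h1, h2]
      have hsplit : V ⁻¹' s ∩ Ioc 0 1 = (V ⁻¹' s ∩ Ioc 0 γ) ∪ (V ⁻¹' s ∩ Ioc γ 1) := by
        rw [← inter_union_distrib_left, Ioc_union_Ioc_eq_Ioc hγ0.le hγ1]
      have hA : V ⁻¹' s ∩ Ioc 0 γ = (fun x => x + (1 - γ)) ⁻¹' (s ∩ Ioc (1 - γ) 1) := by
        ext ω
        simp only [mem_inter_iff, mem_preimage, mem_Ioc, hV]
        constructor
        · rintro ⟨hωs, hω0, hωγ⟩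
          rw [if_pos hωγ] at hωs
          exact ⟨hωs, by linarith, by linarith⟩
        · rintro ⟨hωs, hω0, hωγ⟩
          have h1 : ω ≤ γ := by linarith
          exact ⟨by rwa [if_pos h1], by linarith, h1⟩
      have hB : V ⁻¹' s ∩ Ioc γ 1 = (fun x => x + (-γ)) ⁻¹' (s ∩ Ioc 0 (1 - γ)) := by
        ext ω
        simp only [mem_inter_iff, mem_preimage, mem_Ioc, hV]
        constructor
        · rintro ⟨hωs, hωγ, hω1⟩
          rw [if_neg (by linarith)] at hωs
          refine ⟨by simpa [sub_eq_add_neg] using hωs, by linarith, by linarith⟩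
        · rintro ⟨hωs, hω0, hω1⟩
          have h1 : ¬ ω ≤ γ := by simp at hω0 ⊢; linarith
          exact ⟨by rw [if_neg h1]; simpa [sub_eq_add_neg] using hωs, by linarith, by linarith⟩
      have hdisj : Disjoint (s ∩ Ioc (1 - γ) 1) (s ∩ Ioc (0:ℝ) (1 - γ)) := by
        apply Disjoint.inter_left' ; apply Disjoint.inter_right'
        exact (Set.Ioc_disjoint_Ioc_of_le (a := (0:ℝ)) le_rfl).symm
      have hmeasB : MeasurableSet (s ∩ Ioc (0:ℝ) (1 - γ)) := hs.inter measurableSet_Ioc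
      calc volume (V ⁻¹' s ∩ Ioc 0 1)
          = volume (V ⁻¹' s ∩ Ioc 0 γ) + volume (V ⁻¹' s ∩ Ioc γ 1) := by
            rw [hsplit]
            refine measure_union ?_ ((hVmeas hs).inter measurableSet_Ioc)
            exact (Set.Ioc_disjoint_Ioc_of_le (a := (0:ℝ)) le_rfl).mono inf_le_right inf_le_right
        _ = volume (s ∩ Ioc (1 - γ) 1) + volume (s ∩ Ioc 0 (1 - γ)) := by
            rw [hA, hB, measure_preimage_add_right, measure_preimage_add_right]
        _ = volume ((s ∩ Ioc (1 - γ) 1) ∪ (s ∩ Ioc 0 (1 - γ))) :=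
            (measure_union hdisj hmeasB).symm
        _ = volume (s ∩ Ioc 0 1) := by
            rw [← inter_union_distrib_left, union_comm,
              Ioc_union_Ioc_eq_Ioc (by linarith) (by linarith)]
    · -- P(U ≤ V) = γ
      have hset : {ω : ℝ | id ω ≤ V ω} ∩ Icc 0 1 = Icc 0 γ := by
        ext ω
        simp only [mem_inter_iff, mem_setOf_eq, mem_Icc, id, hV]
        constructor
        · rintro ⟨hle, hω0, hω1⟩
          refine ⟨hω0, ?_⟩
          by_contra h
          push_neg at h
          rw [if_neg (by linarith)] at hle
          linarith
        · rintro ⟨hω0, hωγ⟩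
          rw [if_pos hωγ]
          exact ⟨by linarith, hω0, by linarith⟩
      rw [hP, Measure.restrict_apply' measurableSet_Icc, hset, Real.volume_Icc, sub_zero]
  refine ⟨main, fun γ γ' hγ0 hγγ' hγ'1 => ?_⟩
  set m : ℝ := (γ + γ') / 2 with hm
  have hm0 : 0 < m := by linarith
  obtain ⟨Ω, inst, P, hProb, U, V, hU, hVu, hPm⟩ :=
    main m ⟨by linarith, by linarith⟩
  refine ⟨Ω, inst, P, hProb, U, V, hU, hVu, ?_, ?_⟩
  · rw [hPm]; exact ENNReal.ofReal_le_ofReal (by linarith)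
  · rw [hPm]
    simp only [not_le]
    exact ENNReal.ofReal_lt_ofReal_iff_of_nonneg (by linarith) |>.mpr (by linarith)
end
end

section
/- Let r be a binary relation on the class 𝒢 of distribution functions satisfying: (a) r(G,G) holds for every G ∈ 𝒢, and (b) whenever r(G1,G2) holds one has G1 ⪯st G2. Let (U,V) be a pair of random variables on a probability space (Ω, 𝓕, P), each uniformly distributed on [0,1] (representing a copula C), and let γ ∈ [0,1]. Then the following are equivalent: (i) for all G1, G2 ∈ 𝒢 with r(G1,G2) one has P(G1⁻¹(U) ≤ G2⁻¹(V)) ≥ γ; (ii) for all G1, G2 ∈ 𝒢 with G1 ⪯st G2 one has P(G1⁻¹(U) ≤ G2⁻¹(V)) ≥ γ. (That is, 𝓛_γ^(∗) = 𝓛_γ for any reflexive relation ⪯∗ stronger than ⪯st.) -/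
open MeasureTheory Set

noncomputable section

/-- Auxiliary: if G2 ≤ G1 pointwise then Ginv G1 v ≤ Ginv G2 v away from v = 1. -/
lemma ginv_mono_aux (G1 G2 : ℝ → ℝ) (h1 : IsCDF G1) (h2 : IsCDF G2)
    (hle : ∀ t, G2 t ≤ G1 t) (v : ℝ) (hv : v ≠ 1) : Ginv G1 v ≤ Ginv G2 v := by
  obtain ⟨m1, _, b1, t1⟩ := h1
  obtain ⟨m2, _, b2, t2⟩ := h2
  have hG1le : ∀ x, G1 x ≤ 1 := fun x => m1.ge_of_tendsto t1 x
  have hG2le : ∀ x, G2 x ≤ 1 := fun x => m2.ge_of_tendsto t2 x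
  have hG1ge : ∀ x, 0 ≤ G1 x := fun x => m1.le_of_tendsto b1 x
  have hG2ge : ∀ x, 0 ≤ G2 x := fun x => m2.le_of_tendsto b2 x
  rcases lt_trichotomy v 1 with hv1 | hv1 | hv1
  · rcases le_or_gt v 0 with hv0 | hv0
    · have e1 : {x | v ≤ G1 x} = univ := eq_univ_of_forall fun x => hv0.trans (hG1ge x)
      have e2 : {x | v ≤ G2 x} = univ := eq_univ_of_forall fun x => hv0.trans (hG2ge x)
      simp [Ginv, e1, e2]
    · have hne : {x | v ≤ G2 x}.Nonempty := by
        obtain ⟨x, hx⟩ := (t2.eventually (eventually_gt_nhds hv1)).exists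
        exact ⟨x, hx.le⟩
      have hbdd : BddBelow {x | v ≤ G1 x} := by
        obtain ⟨N, hN⟩ := Filter.eventually_atBot.mp (b1.eventually (eventually_lt_nhds hv0))
        refine ⟨N, fun x hx => ?_⟩
        by_contra hc
        exact absurd (hN x (le_of_not_ge hc)) (not_lt.mpr hx)
      exact csInf_le_csInf hbdd hne (fun x hx => le_trans hx (hle x))
  · exact absurd hv1 hv
  · have e1 : {x | v ≤ G1 x} = ∅ :=
      eq_empty_of_forall_notMem fun x hx => absurd (le_trans hx (hG1le x)) (not_le.mpr hv1)
    have e2 : {x | v ≤ G2 x} = ∅ :=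
      eq_empty_of_forall_notMem fun x hx => absurd (le_trans hx (hG2le x)) (not_le.mpr hv1)
    simp [Ginv, e1, e2]

/-- For any reflexive binary relation r on 𝒢 that is stronger than ⪯st,
the class 𝓛_γ^(∗) defined through r coincides with 𝓛_γ. -/
theorem stmt10 {Ω : Type*} [MeasurableSpace Ω] (P : Measure Ω) [IsProbabilityMeasure P]
    (U V : Ω → ℝ) (hU : IsUniform01 P U) (hV : IsUniform01 P V)
    (r : (ℝ → ℝ) → (ℝ → ℝ) → Prop)
    (hrefl : ∀ G : ℝ → ℝ, MemG G → r G G)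
    (hst : ∀ G1 G2 : ℝ → ℝ, MemG G1 → MemG G2 → r G1 G2 → StOrd G1 G2)
    (γ : ℝ) (hγ : γ ∈ Icc (0:ℝ) 1) :
    (∀ G1 G2 : ℝ → ℝ, MemG G1 → MemG G2 → r G1 G2 →
        ENNReal.ofReal γ ≤ P {ω | Ginv G1 (U ω) ≤ Ginv G2 (V ω)}) ↔
    (∀ G1 G2 : ℝ → ℝ, MemG G1 → MemG G2 → StOrd G1 G2 →
        ENNReal.ofReal γ ≤ P {ω | Ginv G1 (U ω) ≤ Ginv G2 (V ω)}) := by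
  constructor
  · intro hi G1 G2 hG1 hG2 hord
    -- V = 1 has probability zero
    have hnull : P {ω | V ω = 1} = 0 := by
      have : {ω | V ω = 1} = V ⁻¹' {1} := rfl
      rw [this, ← Measure.map_apply hV.1 (measurableSet_singleton 1), hV.2,
        Measure.restrict_apply (measurableSet_singleton 1)]
      exact measure_mono_null inter_subset_left Real.volume_singleton
    have hsub : {ω | Ginv G1 (U ω) ≤ Ginv G1 (V ω)} ⊆
        {ω | Ginv G1 (U ω) ≤ Ginv G2 (V ω)} ∪ {ω | V ω = 1} := by
      intro ω hω
      by_cases hv : V ω = 1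
      · exact Or.inr hv
      · exact Or.inl (le_trans hω (ginv_mono_aux G1 G2 hG1.1 hG2.1 hord _ hv))
    calc ENNReal.ofReal γ ≤ P {ω | Ginv G1 (U ω) ≤ Ginv G1 (V ω)} :=
          hi G1 G1 hG1 hG1 (hrefl G1 hG1)
      _ ≤ P ({ω | Ginv G1 (U ω) ≤ Ginv G2 (V ω)} ∪ {ω | V ω = 1}) := measure_mono hsub
      _ ≤ P {ω | Ginv G1 (U ω) ≤ Ginv G2 (V ω)} + P {ω | V ω = 1} := measure_union_le _ _
      _ = P {ω | Ginv G1 (U ω) ≤ Ginv G2 (V ω)} := by rw [hnull, add_zero]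
  · intro hii G1 G2 hG1 hG2 hr
    exact hii G1 G2 hG1 hG2 (hst G1 G2 hG1 hG2 hr)

end
end

section
/- Let Y1, Y2, Y3, Y4, Y5 be independent and identically distributed real-valued random variables on a probability space (Ω, 𝓕, P), whose common distribution is atomless (has continuous distribution function). Define T := min(Y1, Y2), X' := max(Y1, Y2), and X'' := max(Y3, Y4, Y5). Then: (i) X' ⪯st X'', i.e., P(X' > t) ≤ P(X'' > t) for all t ∈ ℝ; (ii) P(T ≤ X') = 1; and (iii) P(T ≤ X'') < 1. Hence the implication T ⪯st X' ⪯st X'' ⇒ P(T ≤ X'') ≤ P(T ≤ X') fails when the connecting copulas of (T,X') and (T,X'') differ. -/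
open MeasureTheory Set ProbabilityTheory

noncomputable section

/-- Auxiliary: an atomless probability measure on ℝ has a median. -/
lemma exists_median_aux (μ : Measure ℝ) [IsProbabilityMeasure μ] (h : ∀ x : ℝ, μ {x} = 0) :
    ∃ t : ℝ, cdf μ t = 1/2 := by
  have hm : Monotone (cdf μ) := monotone_cdf μ
  have hcont : Continuous (cdf μ) := by
    rw [continuous_iff_continuousAt]
    intro a
    rw [hm.continuousAt_iff_leftLim_eq_rightLim]
    have h1 : (cdf μ).measure {a} = 0 := by rw [measure_cdf]; exact h a
    rw [StieltjesFunction.measure_singleton] at h1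
    rw [ENNReal.ofReal_eq_zero] at h1
    have hle : Function.leftLim (cdf μ) a ≤ cdf μ a := hm.leftLim_le le_rfl
    have heq : Function.leftLim (cdf μ) a = cdf μ a := le_antisymm hle (by linarith)
    rw [heq, (cdf μ).rightLim_eq]
  obtain ⟨t0, ht0⟩ : ∃ t0, cdf μ t0 < 1/2 :=
    ((tendsto_cdf_atBot μ).eventually_lt_const (by norm_num : (0:ℝ) < 1/2)).exists
  obtain ⟨t1, ht1⟩ : ∃ t1, 1/2 < cdf μ t1 :=
    ((tendsto_cdf_atTop μ).eventually_const_lt (by norm_num : (1/2:ℝ) < 1)).exists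
  have h01 : t0 ≤ t1 := by
    by_contra hc
    push_neg at hc
    exact absurd (hm hc.le) (by linarith)
  obtain ⟨t, _, ht⟩ := intermediate_value_Icc h01 hcont.continuousOn ⟨ht0.le, ht1.le⟩
  exact ⟨t, ht⟩

/-- For Y1,...,Y5 i.i.d. with atomless common distribution,
T = min(Y1,Y2), X' = max(Y1,Y2), X'' = max(Y3,Y4,Y5): X' ⪯st X'', P(T ≤ X') = 1,
but P(T ≤ X'') < 1. -/
theorem stmt13 {Ω : Type*} [MeasurableSpace Ω] (P : Measure Ω) [IsProbabilityMeasure P]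
    (Y : Fin 5 → Ω → ℝ) (hmeas : ∀ i, Measurable (Y i))
    (hindep : iIndepFun Y P)
    (hident : ∀ i j, IdentDistrib (Y i) (Y j) P P)
    (hatomless : ∀ x : ℝ, P {ω | Y 0 ω = x} = 0) :
    (∀ t : ℝ, P {ω | t < max (Y 0 ω) (Y 1 ω)}
        ≤ P {ω | t < max (Y 2 ω) (max (Y 3 ω) (Y 4 ω))}) ∧
    P {ω | min (Y 0 ω) (Y 1 ω) ≤ max (Y 0 ω) (Y 1 ω)} = 1 ∧
    P {ω | min (Y 0 ω) (Y 1 ω) ≤ max (Y 2 ω) (max (Y 3 ω) (Y 4 ω))} < 1 := by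
  -- product formula for arbitrary measurable sets
  have hprod : ∀ (c : Fin 5 → Set ℝ), (∀ i, MeasurableSet (c i)) →
      P (⋂ i, Y i ⁻¹' c i) = ∏ i, P (Y i ⁻¹' c i) := by
    intro c hc
    exact hindep.meas_iInter (fun i => ⟨c i, hc i, rfl⟩)
  have hid : ∀ (i : Fin 5) (s : Set ℝ), MeasurableSet s → P (Y i ⁻¹' s) = P (Y 0 ⁻¹' s) :=
    fun i s hs => (hident i 0).measure_mem_eq hs
  refine ⟨?_, ?_, ?_⟩
  · -- part 1
    intro t
    set F : ENNReal := P (Y 0 ⁻¹' Iic t) with hF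
    have hF1 : F ≤ 1 := prob_le_one
    have pair : P {ω | max (Y 0 ω) (Y 1 ω) ≤ t} = F * F := by
      have hset : {ω | max (Y 0 ω) (Y 1 ω) ≤ t}
          = ⋂ i, Y i ⁻¹' (![Iic t, Iic t, univ, univ, univ] i) := by
        ext ω
        simp only [mem_setOf_eq, mem_iInter, mem_preimage, max_le_iff]
        constructor
        · rintro ⟨h0, h1⟩ i
          fin_cases i <;> simp [h0, h1]
        · intro h
          exact ⟨by simpa using h 0, by simpa using h 1⟩
      rw [hset, hprod _ (fun i => by fin_cases i <;> simp), Fin.prod_univ_five]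
      simp [hid 1 _ measurableSet_Iic, ← hF]
    have triple : P {ω | max (Y 2 ω) (max (Y 3 ω) (Y 4 ω)) ≤ t} = F * F * F := by
      have hset : {ω | max (Y 2 ω) (max (Y 3 ω) (Y 4 ω)) ≤ t}
          = ⋂ i, Y i ⁻¹' (![univ, univ, Iic t, Iic t, Iic t] i) := by
        ext ω
        simp only [mem_setOf_eq, mem_iInter, mem_preimage, max_le_iff]
        constructor
        · rintro ⟨h2, h3, h4⟩ i
          fin_cases i <;> simp [h2, h3, h4]
        · intro h
          exact ⟨by simpa using h 2, by simpa using h 3, by simpa using h 4⟩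
      rw [hset, hprod _ (fun i => by fin_cases i <;> simp), Fin.prod_univ_five]
      simp [hid 2 _ measurableSet_Iic, hid 3 _ measurableSet_Iic, hid 4 _ measurableSet_Iic, ← hF]
    have hc1 : {ω | t < max (Y 0 ω) (Y 1 ω)} = {ω | max (Y 0 ω) (Y 1 ω) ≤ t}ᶜ := by
      ext ω; simp only [mem_setOf_eq, mem_compl_iff, not_le]
    have hc2 : {ω | t < max (Y 2 ω) (max (Y 3 ω) (Y 4 ω))}
        = {ω | max (Y 2 ω) (max (Y 3 ω) (Y 4 ω)) ≤ t}ᶜ := by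
      ext ω; simp only [mem_setOf_eq, mem_compl_iff, not_le]
    have hm1 : MeasurableSet {ω | max (Y 0 ω) (Y 1 ω) ≤ t} :=
      measurableSet_le ((hmeas 0).max (hmeas 1)) measurable_const
    have hm2 : MeasurableSet {ω | max (Y 2 ω) (max (Y 3 ω) (Y 4 ω)) ≤ t} :=
      measurableSet_le ((hmeas 2).max ((hmeas 3).max (hmeas 4))) measurable_const
    rw [hc1, hc2, measure_compl hm1 (measure_ne_top _ _),
      measure_compl hm2 (measure_ne_top _ _), measure_univ, pair, triple]
    exact tsub_le_tsub_left (mul_le_of_le_one_right zero_le hF1) _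
  · -- part 2
    have : {ω | min (Y 0 ω) (Y 1 ω) ≤ max (Y 0 ω) (Y 1 ω)} = univ := by
      ext ω
      simp only [mem_setOf_eq, mem_univ, iff_true]
      exact (min_le_left _ _).trans (le_max_left _ _)
    rw [this, measure_univ]
  · -- part 3
    set μ : Measure ℝ := P.map (Y 0) with hμ
    have : IsProbabilityMeasure μ := Measure.isProbabilityMeasure_map (hmeas 0).aemeasurable
    have hat : ∀ x : ℝ, μ {x} = 0 := by
      intro x
      rw [hμ, Measure.map_apply (hmeas 0) (measurableSet_singleton x)]
      exact hatomless x
    obtain ⟨t, ht⟩ := exists_median_aux μ hat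
    have hIic : μ (Iic t) = ENNReal.ofReal (1/2) := by rw [← ofReal_cdf μ t, ht]
    have hIoi : μ (Ioi t) = ENNReal.ofReal (1/2) := by
      have hc := measure_compl (measurableSet_Iic (a := t)) (measure_ne_top μ _)
      rw [compl_Iic] at hc
      rw [hc, measure_univ, hIic, show (1:ENNReal) = ENNReal.ofReal 1 by simp,
        ← ENNReal.ofReal_sub _ (by norm_num)]
      norm_num
    have hYIic : ∀ i : Fin 5, P (Y i ⁻¹' Iic t) = ENNReal.ofReal (1/2) := by
      intro i
      rw [hid i _ measurableSet_Iic, ← Measure.map_apply (hmeas 0) measurableSet_Iic, ← hμ, hIic]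
    have hYIoi : ∀ i : Fin 5, P (Y i ⁻¹' Ioi t) = ENNReal.ofReal (1/2) := by
      intro i
      rw [hid i _ measurableSet_Ioi, ← Measure.map_apply (hmeas 0) measurableSet_Ioi, ← hμ, hIoi]
    -- the event: Y0, Y1 > t and Y2, Y3, Y4 ≤ t
    set c : Fin 5 → Set ℝ := ![Ioi t, Ioi t, Iic t, Iic t, Iic t] with hcdef
    have hEprod : P (⋂ i, Y i ⁻¹' c i) = ∏ i, P (Y i ⁻¹' c i) :=
      hprod c (fun i => by rw [hcdef]; fin_cases i <;> simp)
    have hEpos : 0 < P (⋂ i, Y i ⁻¹' c i) := by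
      rw [hEprod, pos_iff_ne_zero, Finset.prod_ne_zero_iff]
      intro i _
      fin_cases i <;>
        simp [hcdef, hYIoi, hYIic]
    have hsub : (⋂ i, Y i ⁻¹' c i) ⊆
        {ω | min (Y 0 ω) (Y 1 ω) ≤ max (Y 2 ω) (max (Y 3 ω) (Y 4 ω))}ᶜ := by
      intro ω hω
      simp only [mem_iInter, mem_preimage] at hω
      have h0 : t < Y 0 ω := by simpa [hcdef] using hω 0
      have h1 : t < Y 1 ω := by simpa [hcdef] using hω 1
      have h2 : Y 2 ω ≤ t := by simpa [hcdef] using hω 2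
      have h3 : Y 3 ω ≤ t := by simpa [hcdef] using hω 3
      have h4 : Y 4 ω ≤ t := by simpa [hcdef] using hω 4
      simp only [mem_compl_iff, mem_setOf_eq, not_le, lt_min_iff, max_lt_iff]
      refine ⟨⟨?_, ?_, ?_⟩, ⟨?_, ?_, ?_⟩⟩ <;> linarith
    have hcompl : 0 < P {ω | min (Y 0 ω) (Y 1 ω) ≤ max (Y 2 ω) (max (Y 3 ω) (Y 4 ω))}ᶜ :=
      lt_of_lt_of_le hEpos (measure_mono hsub)
    have hms : MeasurableSet {ω | min (Y 0 ω) (Y 1 ω) ≤ max (Y 2 ω) (max (Y 3 ω) (Y 4 ω))} :=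
      measurableSet_le ((hmeas 0).min (hmeas 1)) ((hmeas 2).max ((hmeas 3).max (hmeas 4)))
    by_contra hcon
    push_neg at hcon
    have h1' : P {ω | min (Y 0 ω) (Y 1 ω) ≤ max (Y 2 ω) (max (Y 3 ω) (Y 4 ω))} = 1 :=
      le_antisymm prob_le_one hcon
    rw [measure_compl hms (measure_ne_top _ _), h1', measure_univ, tsub_self] at hcompl
    exact lt_irrefl _ hcompl
end
end

section
/- The double integral over the unit square of the function (u,v) ↦ 1/(2·sqrt(v)·sqrt(1−u)) restricted to the region {(u,v) ∈ [0,1]² : u ≤ v} equals 2 − π/2; that is, ∫₀¹∫₀¹ 1_{u ≤ v} · (2·sqrt(v)·sqrt(1−u))⁻¹ dv du = 2 − π/2. Moreover 2 − π/2 < 1/2. (This is the value η(K) for the copula K of the order statistics of two i.i.d. continuous random variables.) -/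
open MeasureTheory Set intervalIntegral

noncomputable section

lemma inner_eq (u : ℝ) (hu : u ∈ Icc (0:ℝ) 1) :
    (∫ v in (0:ℝ)..1, (if u ≤ v then (2 * Real.sqrt v * Real.sqrt (1 - u))⁻¹ else 0))
      = (1 - Real.sqrt u) / Real.sqrt (1 - u) := by
  obtain ⟨hu0, hu1⟩ := hu
  set f : ℝ → ℝ := fun v => if u ≤ v then (2 * Real.sqrt v * Real.sqrt (1 - u))⁻¹ else 0 with hf
  set g : ℝ → ℝ := fun v => (2 * Real.sqrt (1 - u))⁻¹ * v ^ (-(1/2) : ℝ) with hg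
  have hfg : ∀ v ∈ Icc u 1, f v = g v := by
    intro v hv
    have hv0 : (0:ℝ) ≤ v := le_trans hu0 hv.1
    simp only [hf, hg, if_pos hv.1]
    rw [Real.rpow_neg hv0, ← Real.sqrt_eq_rpow, mul_inv, mul_inv]
    ring
  have hg_int : IntervalIntegrable g volume u 1 :=
    (intervalIntegral.intervalIntegrable_rpow' (by norm_num)).const_mul _
  have h2 : IntervalIntegrable f volume u 1 :=
    hg_int.congr_ae <| by
      filter_upwards [ae_restrict_mem measurableSet_uIoc] with v hv
      rw [uIoc_of_le hu1] at hv
      exact (hfg v ⟨hv.1.le, hv.2⟩).symm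
  have h1 : IntervalIntegrable f volume 0 u := by
    apply (_root_.intervalIntegrable_const (c := (0:ℝ))).congr_ae
    have hne : ∀ᵐ v ∂(volume.restrict (Set.uIoc 0 u)), v ≠ u :=
      ae_restrict_of_ae (compl_mem_ae_iff.mpr (measure_singleton u))
    filter_upwards [ae_restrict_mem measurableSet_uIoc, hne] with v hv hvne
    rw [uIoc_of_le hu0] at hv
    have : ¬ u ≤ v := not_le.mpr (lt_of_le_of_ne hv.2 hvne)
    simp [hf, this]
  have hsplit : (∫ v in (0:ℝ)..u, f v) + (∫ v in u..1, f v) = ∫ v in (0:ℝ)..1, f v :=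
    intervalIntegral.integral_add_adjacent_intervals h1 h2
  have hz : (∫ v in (0:ℝ)..u, f v) = 0 := by
    rw [intervalIntegral.integral_congr_ae (g := fun _ => (0:ℝ))]
    · simp
    · have hne : ∀ᵐ v : ℝ, v ≠ u := compl_mem_ae_iff.mpr (measure_singleton u)
      filter_upwards [hne] with v hvne hv
      rw [uIoc_of_le hu0] at hv
      have : ¬ u ≤ v := not_le.mpr (lt_of_le_of_ne hv.2 hvne)
      simp [hf, this]
  have hmain : (∫ v in u..1, f v) = ∫ v in u..1, g v :=
    intervalIntegral.integral_congr (by rwa [uIcc_of_le hu1])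
  have hval : (∫ v in u..1, g v) = (1 - Real.sqrt u) / Real.sqrt (1 - u) := by
    rw [hg, intervalIntegral.integral_const_mul,
      integral_rpow (Or.inl (by norm_num : (-1:ℝ) < -(1/2)))]
    rw [show (-(1/2) + 1 : ℝ) = 1/2 by norm_num, Real.one_rpow, ← Real.sqrt_eq_rpow]
    rw [mul_inv, div_eq_mul_inv]
    norm_num; ring
  rw [← hsplit, hz, zero_add, hmain, hval]

lemma outer_int : IntervalIntegrable (fun u => (1 - Real.sqrt u) / Real.sqrt (1 - u)) volume 0 1 := by
  have J : IntervalIntegrable (fun u : ℝ => (1 - u) ^ (-(1/2) : ℝ)) volume 0 1 := by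
    have := (intervalIntegral.intervalIntegrable_rpow'
      (by norm_num : (-1:ℝ) < -(1/2)) (a := 0) (b := 1)).comp_sub_left 1
    simpa using this.symm
  have K : IntervalIntegrable (fun u : ℝ => (1 - Real.sqrt u) * (1 - u) ^ (-(1/2) : ℝ)) volume 0 1 :=
    J.continuousOn_mul (by fun_prop)
  apply K.congr_ae
  filter_upwards [ae_restrict_mem measurableSet_uIoc] with v hv
  rw [uIoc_of_le zero_le_one] at hv
  rw [Real.rpow_neg (by linarith [hv.2]), ← Real.sqrt_eq_rpow, div_eq_mul_inv]

lemma outer_eq :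
    (∫ u in (0:ℝ)..1, (1 - Real.sqrt u) / Real.sqrt (1 - u)) = 2 - Real.pi / 2 := by
  set F : ℝ → ℝ := fun u =>
    Real.sqrt u * Real.sqrt (1 - u) - 2 * Real.sqrt (1 - u) - Real.arcsin (Real.sqrt u) with hF
  have hcont : ContinuousOn F (Icc 0 1) := by
    apply Continuous.continuousOn; continuity
  have hderiv : ∀ x ∈ Ioo (0:ℝ) 1,
      HasDerivAt F ((1 - Real.sqrt x) / Real.sqrt (1 - x)) x := by
    intro x hx
    have hx0 : (0:ℝ) < x := hx.1
    have hx1 : x < 1 := hx.2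
    have ha : 0 < Real.sqrt x := Real.sqrt_pos.mpr hx0
    have hb : 0 < Real.sqrt (1 - x) := Real.sqrt_pos.mpr (by linarith)
    have d1 : HasDerivAt (fun u => Real.sqrt u) (1 / (2 * Real.sqrt x)) x :=
      Real.hasDerivAt_sqrt hx0.ne'
    have dlin : HasDerivAt (fun u : ℝ => 1 - u) (-1) x := by
      simpa using (hasDerivAt_id x).const_sub 1
    have d2 : HasDerivAt (fun u => Real.sqrt (1 - u)) (1 / (2 * Real.sqrt (1 - x)) * (-1)) x :=
      (Real.hasDerivAt_sqrt (by linarith : (1:ℝ) - x ≠ 0)).comp x dlin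
    have hsa : Real.sqrt x ≠ -1 := by linarith
    have hsa1 : Real.sqrt x ≠ 1 := by
      intro h
      have := Real.sq_sqrt hx0.le
      rw [h] at this; nlinarith
    have d3 : HasDerivAt (fun u => Real.arcsin (Real.sqrt u))
        (1 / Real.sqrt (1 - Real.sqrt x ^ 2) * (1 / (2 * Real.sqrt x))) x :=
      (Real.hasDerivAt_arcsin hsa hsa1).comp x d1
    have dF : HasDerivAt F
        ((1 / (2 * Real.sqrt x)) * Real.sqrt (1 - x)
          + Real.sqrt x * (1 / (2 * Real.sqrt (1 - x)) * (-1))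
          - 2 * (1 / (2 * Real.sqrt (1 - x)) * (-1))
          - 1 / Real.sqrt (1 - Real.sqrt x ^ 2) * (1 / (2 * Real.sqrt x))) x :=
      ((d1.mul d2).sub (d2.const_mul 2)).sub d3
    convert dF using 1
    rw [Real.sq_sqrt hx0.le]
    have ha2 : Real.sqrt x ^ 2 = x := Real.sq_sqrt hx0.le
    have hb2 : Real.sqrt (1 - x) ^ 2 = 1 - x := Real.sq_sqrt (by linarith)
    have hab : Real.sqrt x ^ 2 + Real.sqrt (1 - x) ^ 2 = 1 := by rw [ha2, hb2]; ring
    set a := Real.sqrt x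
    set b := Real.sqrt (1 - x)
    field_simp
    linear_combination (-1) * hab
  have := intervalIntegral.integral_eq_sub_of_hasDerivAt_of_le zero_le_one hcont hderiv outer_int
  rw [this, hF]
  simp [Real.sqrt_one, Real.sqrt_zero, Real.arcsin_one, Real.arcsin_zero]
  ring

/-- ∫₀¹∫₀¹ 1_{u ≤ v}·(2√v·√(1-u))⁻¹ dv du = 2 - π/2, and 2 - π/2 < 1/2.
(This is η(K) for the copula K of the order statistics of two i.i.d. continuous rv's.) -/
theorem stmt16 :
    (∫ u in (0:ℝ)..1, ∫ v in (0:ℝ)..1,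
        (if u ≤ v then (2 * Real.sqrt v * Real.sqrt (1 - u))⁻¹ else 0))
      = 2 - Real.pi / 2 ∧
    2 - Real.pi / 2 < 1 / 2 := by
  constructor
  · rw [intervalIntegral.integral_congr (g := fun u => (1 - Real.sqrt u) / Real.sqrt (1 - u))
      (fun u hu => inner_eq u (by rwa [uIcc_of_le zero_le_one] at hu))]
    exact outer_eq
  · linarith [Real.pi_gt_three]
end
end

section
/- Let A, B be independent and identically distributed real-valued random variables on a probability space (Ω, 𝓕, P), with common distribution function G ∈ 𝒢, and let X1 := min(A,B), X2 := max(A,B). Then X1 has distribution function F1(x) = 2G(x) − G(x)², X2 has distribution function F2(x) = G(x)², and for every (u,v) ∈ [0,1]² the connecting copula of (X1, X2) is given by P( 2G(X1) − G(X1)² ≤ u and G(X2)² ≤ v ) = K(u,v), where K(u,v) := 2(1 − sqrt(1−u))·sqrt(v) − (1 − sqrt(1−u))² if v ≥ (1 − sqrt(1−u))², and K(u,v) := v otherwise. In particular K does not depend on G. -/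
open MeasureTheory Set

noncomputable section

open ProbabilityTheory

/-- The copula of the pair (min, max) of two i.i.d. continuous random variables. -/
def Kcopula (u v : ℝ) : ℝ :=
  if (1 - Real.sqrt (1 - u)) ^ 2 ≤ v then
    2 * (1 - Real.sqrt (1 - u)) * Real.sqrt v - (1 - Real.sqrt (1 - u)) ^ 2
  else v


lemma memG_nonneg {G : ℝ → ℝ} (hG : MemG G) (x : ℝ) : 0 ≤ G x := by
  refine le_of_tendsto hG.1.2.2.1 ?_
  filter_upwards [Filter.eventually_le_atBot x] with y hy using hG.1.1 hy

lemma memG_le_one {G : ℝ → ℝ} (hG : MemG G) (x : ℝ) : G x ≤ 1 := by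
  refine ge_of_tendsto hG.1.2.2.2 ?_
  filter_upwards [Filter.eventually_ge_atTop x] with y hy using hG.1.1 hy

lemma memG_surj {G : ℝ → ℝ} (hG : MemG G) {t : ℝ} (ht : t ∈ Ioo (0:ℝ) 1) :
    ∃ x, G x = t := by
  obtain ⟨x0, hx0⟩ := (hG.1.2.2.1.eventually (eventually_lt_nhds ht.1)).exists
  obtain ⟨x1, hx1⟩ := (hG.1.2.2.2.eventually (eventually_gt_nhds ht.2)).exists
  have hle : x0 ≤ x1 := by
    by_contra h
    exact absurd (hG.1.1 (le_of_not_ge h)) (by linarith)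
  obtain ⟨x, _, hx⟩ := intermediate_value_Icc hle hG.2.1.continuousOn
    ⟨le_of_lt hx0, le_of_lt hx1⟩
  exact ⟨x, hx⟩

/-- Probability integral transform. -/
lemma pit {Ω : Type*} [MeasurableSpace Ω] (P : Measure Ω) [IsProbabilityMeasure P]
    (A : Ω → ℝ) (G : ℝ → ℝ) (hG : MemG G)
    (hlaw : ∀ t, (P {ω | A ω ≤ t}).toReal = G t) :
    ∀ t ∈ Icc (0:ℝ) 1, (P {ω | G (A ω) ≤ t}).toReal = t := by
  have key : ∀ t ∈ Ioo (0:ℝ) 1, (P {ω | G (A ω) ≤ t}).toReal = t := by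
    intro t ht
    obtain ⟨x, hx⟩ := memG_surj hG ht
    have hset : {ω | G (A ω) ≤ t} = {ω | A ω ≤ x} := by
      ext ω
      simp only [mem_setOf_eq]
      constructor
      · intro h
        by_contra hc
        push_neg at hc
        have h1 : G (A ω) = t := le_antisymm h (hx ▸ hG.1.1 hc.le)
        have hxs : x ∈ {y | 0 < G y ∧ G y < 1} := by
          simp only [mem_setOf_eq, hx]; exact ⟨ht.1, ht.2⟩
        have hAs : A ω ∈ {y | 0 < G y ∧ G y < 1} := by
          simp only [mem_setOf_eq, h1]; exact ⟨ht.1, ht.2⟩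
        have := hG.2.2 hxs hAs hc
        rw [hx, h1] at this
        exact lt_irrefl t this
      · intro h
        calc G (A ω) ≤ G x := hG.1.1 h
        _ = t := hx
    rw [hset, hlaw, hx]
  intro t ht
  rcases eq_or_lt_of_le ht.1 with h0 | h0
  · rw [← h0]
    have hle : ∀ ε ∈ Ioo (0:ℝ) 1, (P {ω | G (A ω) ≤ 0}).toReal ≤ ε := by
      intro ε hε
      rw [← key ε hε]
      refine ENNReal.toReal_mono (measure_ne_top _ _) (measure_mono ?_)
      intro ω hω
      exact le_trans hω hε.1.le
    refine le_antisymm ?_ ENNReal.toReal_nonneg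
    by_contra h
    push_neg at h
    have := hle (min ((P {ω | G (A ω) ≤ 0}).toReal / 2) (1/2))
      ⟨lt_min (by linarith) (by norm_num), lt_of_le_of_lt (min_le_right _ _) (by norm_num)⟩
    have h2 := min_le_left ((P {ω | G (A ω) ≤ 0}).toReal / 2) (1/2)
    linarith
  rcases eq_or_lt_of_le ht.2 with h1 | h1
  · rw [h1]
    have : {ω | G (A ω) ≤ 1} = univ := eq_univ_of_forall fun ω => memG_le_one hG _
    rw [this, measure_univ, ENNReal.toReal_one]
  · exact key t ⟨h0, h1⟩

/-- For A, B i.i.d. with common CDF G ∈ 𝒢, X1 = min(A,B) and X2 = max(A,B)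
have CDFs 2G - G² and G², and the connecting copula of (X1,X2) is K, independently of G. -/
theorem stmt17 {Ω : Type*} [MeasurableSpace Ω] (P : Measure Ω) [IsProbabilityMeasure P]
    (A B : Ω → ℝ) (hA : Measurable A) (hB : Measurable B)
    (hindep : IndepFun A B P) (hident : IdentDistrib A B P P)
    (G : ℝ → ℝ) (hG : MemG G)
    (hlaw : ∀ t, (P {ω | A ω ≤ t}).toReal = G t) :
    (∀ x, (P {ω | min (A ω) (B ω) ≤ x}).toReal = 2 * G x - G x ^ 2) ∧
    (∀ x, (P {ω | max (A ω) (B ω) ≤ x}).toReal = G x ^ 2) ∧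
    (∀ u ∈ Icc (0:ℝ) 1, ∀ v ∈ Icc (0:ℝ) 1,
      (P {ω | 2 * G (min (A ω) (B ω)) - G (min (A ω) (B ω)) ^ 2 ≤ u ∧
              G (max (A ω) (B ω)) ^ 2 ≤ v}).toReal = Kcopula u v) := by
  have hGm : Measurable G := hG.2.1.measurable
  have hlawB : ∀ t, (P {ω | B ω ≤ t}).toReal = G t := by
    intro t
    have := hident.measure_mem_eq (s := Iic t) measurableSet_Iic
    rw [← hlaw t]
    congr 1
    exact this.symm
  -- basic independence for events {A ≤ x} ∩ {B ≤ y}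
  have hAB : ∀ x y : ℝ, P ({ω | A ω ≤ x} ∩ {ω | B ω ≤ y}) = P {ω | A ω ≤ x} * P {ω | B ω ≤ y} :=
    fun x y => hindep.measure_inter_preimage_eq_mul (Iic x) (Iic y)
      measurableSet_Iic measurableSet_Iic
  have hABr : ∀ x y : ℝ, (P ({ω | A ω ≤ x} ∩ {ω | B ω ≤ y})).toReal = G x * G y := by
    intro x y
    rw [hAB, ENNReal.toReal_mul, hlaw, hlawB]
  -- Part 2
  have part2 : ∀ x, (P {ω | max (A ω) (B ω) ≤ x}).toReal = G x ^ 2 := by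
    intro x
    have hset : {ω | max (A ω) (B ω) ≤ x} = {ω | A ω ≤ x} ∩ {ω | B ω ≤ x} := by
      ext ω; simp [max_le_iff]
    rw [hset, hABr, sq]
  -- Part 1
  have part1 : ∀ x, (P {ω | min (A ω) (B ω) ≤ x}).toReal = 2 * G x - G x ^ 2 := by
    intro x
    have hset : {ω | min (A ω) (B ω) ≤ x} = {ω | A ω ≤ x} ∪ {ω | B ω ≤ x} := by
      ext ω; simp [min_le_iff]
    have hie := measure_union_add_inter (μ := P) {ω | A ω ≤ x}
      (show MeasurableSet {ω | B ω ≤ x} from hB measurableSet_Iic)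
    have hfin : ∀ s : Set Ω, P s ≠ ⊤ := fun s => measure_ne_top _ _
    have hie' : (P ({ω | A ω ≤ x} ∪ {ω | B ω ≤ x})).toReal
        + (P ({ω | A ω ≤ x} ∩ {ω | B ω ≤ x})).toReal
        = (P {ω | A ω ≤ x}).toReal + (P {ω | B ω ≤ x}).toReal := by
      rw [← ENNReal.toReal_add (hfin _) (hfin _), ← ENNReal.toReal_add (hfin _) (hfin _), hie]
    rw [hABr] at hie'
    rw [hlaw, hlawB] at hie'
    rw [hset]
    nlinarith [hie']
  refine ⟨part1, part2, ?_⟩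
  -- Part 3
  have pitA := pit P A G hG hlaw
  have pitB := pit P B G hG hlawB
  have hindep' : IndepFun (fun ω => G (A ω)) (fun ω => G (B ω)) P := hindep.comp hGm hGm
  have hjoint : ∀ s ∈ Icc (0:ℝ) 1, ∀ t ∈ Icc (0:ℝ) 1,
      (P ({ω | G (A ω) ≤ s} ∩ {ω | G (B ω) ≤ t})).toReal = s * t := by
    intro s hs t ht
    have := hindep'.measure_inter_preimage_eq_mul (Iic s) (Iic t)
      measurableSet_Iic measurableSet_Iic
    have heq : P ({ω | G (A ω) ≤ s} ∩ {ω | G (B ω) ≤ t})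
        = P {ω | G (A ω) ≤ s} * P {ω | G (B ω) ≤ t} := this
    rw [heq, ENNReal.toReal_mul, pitA s hs, pitB t ht]
  intro u hu v hv
  set a := 1 - Real.sqrt (1 - u) with ha
  have hsu : Real.sqrt (1 - u) = 1 - a := by rw [ha]; ring
  have hsu1 : Real.sqrt (1 - u) ≤ 1 := by
    calc Real.sqrt (1 - u) ≤ Real.sqrt 1 := Real.sqrt_le_sqrt (by linarith [hu.1])
    _ = 1 := Real.sqrt_one
  have ha0 : 0 ≤ a := by rw [ha]; linarith
  have ha1 : a ≤ 1 := by rw [ha]; linarith [Real.sqrt_nonneg (1 - u)]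
  set b := Real.sqrt v with hb
  have hb0 : 0 ≤ b := Real.sqrt_nonneg v
  have hb1 : b ≤ 1 := by
    calc b ≤ Real.sqrt 1 := Real.sqrt_le_sqrt hv.2
    _ = 1 := Real.sqrt_one
  have hbb : b * b = v := Real.mul_self_sqrt hv.1
  -- pointwise characterizations
  have hiff1 : ∀ g : ℝ, 0 ≤ g → g ≤ 1 → (2 * g - g ^ 2 ≤ u ↔ g ≤ a) := by
    intro g hg0 hg1
    constructor
    · intro h
      have h2 : 1 - u ≤ (1 - g) ^ 2 := by nlinarith
      have h3 := Real.sqrt_le_sqrt h2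
      rw [Real.sqrt_sq (by linarith)] at h3
      rw [hsu] at h3
      linarith
    · intro h
      have h3 : Real.sqrt (1 - u) ≤ 1 - g := by rw [hsu]; linarith
      have h4 : 1 - u ≤ (1 - g) ^ 2 := by
        nlinarith [Real.sq_sqrt (show (0:ℝ) ≤ 1 - u by linarith [hu.2]),
          Real.sqrt_nonneg (1 - u)]
      nlinarith
  have hiff2 : ∀ g : ℝ, 0 ≤ g → (g ^ 2 ≤ v ↔ g ≤ b) := by
    intro g hg0
    rw [hb]
    exact (Real.le_sqrt hg0 hv.1).symm
  have hminmax : ∀ ω, G (min (A ω) (B ω)) = min (G (A ω)) (G (B ω)) :=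
    fun ω => hG.1.1.map_min
  have hmaxmax : ∀ ω, G (max (A ω) (B ω)) = max (G (A ω)) (G (B ω)) :=
    fun ω => hG.1.1.map_max
  have hGbd : ∀ y : ℝ, 0 ≤ G y ∧ G y ≤ 1 := fun y => ⟨memG_nonneg hG y, memG_le_one hG y⟩
  have hsetE : {ω | 2 * G (min (A ω) (B ω)) - G (min (A ω) (B ω)) ^ 2 ≤ u ∧
      G (max (A ω) (B ω)) ^ 2 ≤ v}
      = {ω | min (G (A ω)) (G (B ω)) ≤ a ∧ max (G (A ω)) (G (B ω)) ≤ b} := by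
    ext ω
    simp only [mem_setOf_eq, hminmax, hmaxmax]
    have hm0 : 0 ≤ min (G (A ω)) (G (B ω)) := le_min (hGbd _).1 (hGbd _).1
    have hm1 : min (G (A ω)) (G (B ω)) ≤ 1 := le_trans (min_le_left _ _) (hGbd _).2
    have hM0 : 0 ≤ max (G (A ω)) (G (B ω)) := le_trans (hGbd (A ω)).1 (le_max_left _ _)
    rw [hiff1 _ hm0 hm1, hiff2 _ hM0]
  rw [hsetE]
  simp only [Kcopula]
  rw [← ha, ← hb]
  by_cases hc : a ^ 2 ≤ v
  · rw [if_pos hc]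
    have hab : a ≤ b := by rw [hb]; exact (Real.le_sqrt ha0 hv.1).mpr hc
    -- E = (Sa ∩ Tb) ∪ (Sb ∩ Ta)
    have hsetU : {ω | min (G (A ω)) (G (B ω)) ≤ a ∧ max (G (A ω)) (G (B ω)) ≤ b}
        = ({ω | G (A ω) ≤ a} ∩ {ω | G (B ω) ≤ b}) ∪ ({ω | G (A ω) ≤ b} ∩ {ω | G (B ω) ≤ a}) := by
      ext ω
      simp only [mem_setOf_eq, mem_union, mem_inter_iff, min_le_iff, max_le_iff]
      constructor
      · rintro ⟨h1 | h1, h2, h3⟩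
        · exact Or.inl ⟨h1, h3⟩
        · exact Or.inr ⟨h2, h1⟩
      · rintro (⟨h1, h2⟩ | ⟨h1, h2⟩)
        · exact ⟨Or.inl h1, le_trans h1 hab, h2⟩
        · exact ⟨Or.inr h2, h1, le_trans h2 hab⟩
    have hsetI : ({ω | G (A ω) ≤ a} ∩ {ω | G (B ω) ≤ b}) ∩ ({ω | G (A ω) ≤ b} ∩ {ω | G (B ω) ≤ a})
        = {ω | G (A ω) ≤ a} ∩ {ω | G (B ω) ≤ a} := by
      ext ω
      simp only [mem_inter_iff, mem_setOf_eq]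
      constructor
      · rintro ⟨⟨h1, _⟩, ⟨_, h4⟩⟩
        exact ⟨h1, h4⟩
      · rintro ⟨h1, h2⟩
        exact ⟨⟨h1, le_trans h2 hab⟩, ⟨le_trans h1 hab, h2⟩⟩
    have hmeasY : MeasurableSet ({ω | G (A ω) ≤ b} ∩ {ω | G (B ω) ≤ a}) :=
      ((hGm.comp hA) measurableSet_Iic).inter ((hGm.comp hB) measurableSet_Iic)
    have hie := measure_union_add_inter (μ := P)
      ({ω | G (A ω) ≤ a} ∩ {ω | G (B ω) ≤ b}) hmeasY
    rw [hsetI] at hie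
    have hfin : ∀ s : Set Ω, P s ≠ ⊤ := fun s => measure_ne_top _ _
    have hie' : (P (({ω | G (A ω) ≤ a} ∩ {ω | G (B ω) ≤ b})
          ∪ ({ω | G (A ω) ≤ b} ∩ {ω | G (B ω) ≤ a}))).toReal
        + (P ({ω | G (A ω) ≤ a} ∩ {ω | G (B ω) ≤ a})).toReal
        = (P ({ω | G (A ω) ≤ a} ∩ {ω | G (B ω) ≤ b})).toReal
        + (P ({ω | G (A ω) ≤ b} ∩ {ω | G (B ω) ≤ a})).toReal := by
      rw [← ENNReal.toReal_add (hfin _) (hfin _), ← ENNReal.toReal_add (hfin _) (hfin _), hie]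
    rw [hjoint a ⟨ha0, ha1⟩ b ⟨hb0, hb1⟩, hjoint b ⟨hb0, hb1⟩ a ⟨ha0, ha1⟩,
      hjoint a ⟨ha0, ha1⟩ a ⟨ha0, ha1⟩] at hie'
    rw [hsetU]
    nlinarith [hie']
  · rw [if_neg hc]
    push_neg at hc
    have hba : b ≤ a := by
      by_contra h
      push_neg at h
      have : a ^ 2 ≤ b ^ 2 := by nlinarith
      rw [hb, Real.sq_sqrt hv.1] at this
      linarith
    have hsetI : {ω | min (G (A ω)) (G (B ω)) ≤ a ∧ max (G (A ω)) (G (B ω)) ≤ b}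
        = {ω | G (A ω) ≤ b} ∩ {ω | G (B ω) ≤ b} := by
      ext ω
      simp only [mem_setOf_eq, mem_inter_iff, min_le_iff, max_le_iff]
      constructor
      · rintro ⟨_, h2, h3⟩
        exact ⟨h2, h3⟩
      · rintro ⟨h1, h2⟩
        exact ⟨Or.inl (le_trans h1 hba), h1, h2⟩
    rw [hsetI, hjoint b ⟨hb0, hb1⟩ b ⟨hb0, hb1⟩, hbb]
end
end

section
/- Let X1, X2 be independent real-valued random variables on a probability space (Ω, 𝓕, P) such that X1 ⪯st X2, i.e., their distribution functions satisfy G2(t) ≤ G1(t) for all t ∈ ℝ. Then P(X1 ≤ X2) ≥ 1/2; that is, under independence, the usual stochastic ordering implies stochastic precedence X1 ⪯sp X2. -/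
open MeasureTheory Set ProbabilityTheory

noncomputable section

lemma stmt19_iio_le {μ ν : Measure ℝ} (h : ∀ t, ν (Iic t) ≤ μ (Iic t)) (x : ℝ) :
    ν (Iio x) ≤ μ (Iio x) := by
  have hU : Iio x = ⋃ q : {q : ℚ // (q : ℝ) < x}, Iic (q : ℝ) := by
    ext y
    simp only [mem_Iio, mem_iUnion, mem_Iic, Subtype.exists]
    constructor
    · intro hy
      obtain ⟨q, hq1, hq2⟩ := exists_rat_btwn hy
      exact ⟨q, hq2, hq1.le⟩
    · rintro ⟨q, hq, hyq⟩
      exact lt_of_le_of_lt hyq hq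
  have hdir : Directed (· ⊆ ·) (fun q : {q : ℚ // (q : ℝ) < x} => Iic (q : ℝ)) := by
    intro a b
    rcases le_total (a : ℚ) (b : ℚ) with h' | h'
    · exact ⟨b, Iic_subset_Iic.2 (by exact_mod_cast h'), subset_rfl⟩
    · exact ⟨a, subset_rfl, Iic_subset_Iic.2 (by exact_mod_cast h')⟩
  rw [hU, hdir.measure_iUnion, hdir.measure_iUnion]
  exact iSup_mono fun q => h q

/-- If X1, X2 are independent and X1 ⪯st X2 (i.e. P(X2 ≤ t) ≤ P(X1 ≤ t) for
all t), then P(X1 ≤ X2) ≥ 1/2: stochastic ordering implies stochastic precedence under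
independence. -/
theorem stmt19 {Ω : Type*} [MeasurableSpace Ω] (P : Measure Ω) [IsProbabilityMeasure P]
    (X1 X2 : Ω → ℝ) (hX1 : Measurable X1) (hX2 : Measurable X2)
    (hindep : IndepFun X1 X2 P)
    (hst : ∀ t : ℝ, P {ω | X2 ω ≤ t} ≤ P {ω | X1 ω ≤ t}) :
    1 / 2 ≤ P {ω | X1 ω ≤ X2 ω} := by
  set μ : Measure ℝ := P.map X1 with hμ
  set ν : Measure ℝ := P.map X2 with hν
  have hμp : IsProbabilityMeasure μ := Measure.isProbabilityMeasure_map hX1.aemeasurable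
  have hνp : IsProbabilityMeasure ν := Measure.isProbabilityMeasure_map hX2.aemeasurable
  have hcdf : ∀ t, ν (Iic t) ≤ μ (Iic t) := by
    intro t
    rw [hμ, hν, Measure.map_apply hX1 measurableSet_Iic, Measure.map_apply hX2 measurableSet_Iic]
    exact hst t
  have hIio : ∀ x, ν (Iio x) ≤ μ (Iio x) := stmt19_iio_le hcdf
  have hIci : ∀ x : ℝ, μ (Ici x) ≤ ν (Ici x) := by
    intro x
    have h1 : μ (Ici x) = 1 - μ (Iio x) := by
      rw [← compl_Iio, measure_compl measurableSet_Iio (measure_ne_top _ _), measure_univ]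
    have h2 : ν (Ici x) = 1 - ν (Iio x) := by
      rw [← compl_Iio, measure_compl measurableSet_Iio (measure_ne_top _ _), measure_univ]
    rw [h1, h2]
    exact tsub_le_tsub_left (hIio x) 1
  have hA : MeasurableSet {p : ℝ × ℝ | p.1 ≤ p.2} :=
    measurableSet_le measurable_fst measurable_snd
  have hmap : P.map (fun ω => (X1 ω, X2 ω)) = μ.prod ν :=
    (indepFun_iff_map_prod_eq_prod_map_map hX1.aemeasurable hX2.aemeasurable).1 hindep
  have hPeq : P {ω | X1 ω ≤ X2 ω} = (μ.prod ν) {p : ℝ × ℝ | p.1 ≤ p.2} := by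
    rw [← hmap, Measure.map_apply (hX1.prodMk hX2) hA]
    rfl
  have hprod : (μ.prod ν) {p : ℝ × ℝ | p.1 ≤ p.2} = ∫⁻ x, ν (Ici x) ∂μ := by
    rw [Measure.prod_apply hA]
    rfl
  have hprodμ : (μ.prod μ) {p : ℝ × ℝ | p.1 ≤ p.2} = ∫⁻ x, μ (Ici x) ∂μ := by
    rw [Measure.prod_apply hA]
    rfl
  have hmono : (μ.prod μ) {p : ℝ × ℝ | p.1 ≤ p.2} ≤ (μ.prod ν) {p : ℝ × ℝ | p.1 ≤ p.2} := by
    rw [hprod, hprodμ]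
    exact lintegral_mono fun x => hIci x
  have hswap : (μ.prod μ) {p : ℝ × ℝ | p.2 ≤ p.1} = (μ.prod μ) {p : ℝ × ℝ | p.1 ≤ p.2} := by
    conv_lhs => rw [← Measure.prod_swap (μ := μ) (ν := μ)]
    rw [Measure.map_apply measurable_swap (measurableSet_le measurable_snd measurable_fst)]
    congr 1
  have hhalf : 1 / 2 ≤ (μ.prod μ) {p : ℝ × ℝ | p.1 ≤ p.2} := by
    have huniv : (univ : Set (ℝ × ℝ)) ⊆ {p : ℝ × ℝ | p.1 ≤ p.2} ∪ {p : ℝ × ℝ | p.2 ≤ p.1} := by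
      intro p _
      exact le_total p.1 p.2
    have h1 : (1 : ENNReal) ≤ (μ.prod μ) {p : ℝ × ℝ | p.1 ≤ p.2} +
        (μ.prod μ) {p : ℝ × ℝ | p.2 ≤ p.1} := by
      calc (1 : ENNReal) = (μ.prod μ) univ := by simp
        _ ≤ _ := (measure_mono huniv).trans (measure_union_le _ _)
    rw [hswap, ← two_mul] at h1
    rw [ENNReal.div_le_iff_le_mul (by norm_num) (by norm_num)]
    calc (1:ENNReal) ≤ _ := h1
      _ = _ := by ring
  rw [hPeq]
  exact hhalf.trans hmono
end
end
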